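/- arXiv:1910.00206 — 2 statements merged into one kernel-verified Lean document; each statement's English description precedes it below -/
import Mathlib

section
/- Let v_1, …, v_d be LDP fan data with d ≥ 4, and suppose that for some index i one has det(v_{i−1}, v_i) ≥ 2, det(v_i, v_{i+1}) = 1, and det(v_{i+1}, v_{i+2}) ≥ 2 (i.e., the cones σ_{i−1} and σ_{i+1} are singular while σ_i is nonsingular). Then there exists an index j with j not congruent to i−1, i, or i+1 modulo d such that det(v_j, v_{j+1}) ≥ 2. In particular, the data has at least three singular cones (equivalently, X(Δ) has at least three singular points). -/
/-- The determinant `det(u, w) = u₁w₂ − u₂w₁` of two integer vectors. -/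
def detZ (u w : ℤ × ℤ) : ℤ := u.1 * w.2 - u.2 * w.1

/-- The real vector associated to an integer vector. -/
noncomputable def toR2 (u : ℤ × ℤ) : ℝ × ℝ := ((u.1 : ℝ), (u.2 : ℝ))

/-- The cone `ℝ_{≥0} u + ℝ_{≥0} w` spanned by two integer vectors. -/
def coneOf (u w : ℤ × ℤ) : Set (ℝ × ℝ) :=
  {x | ∃ a b : ℝ, 0 ≤ a ∧ 0 ≤ b ∧ x = a • toR2 u + b • toR2 w}

/-- Complete fan data of length `d`: a cyclic sequence of primitive integer vectors with
`det(v_i, v_{i+1}) ≥ 1` whose successive cones cover `ℝ²` and have pairwise disjoint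
interiors. -/
def IsCompleteFanData (d : ℕ) (v : ZMod d → ℤ × ℤ) : Prop :=
  3 ≤ d ∧
  (∀ i, Int.gcd (v i).1 (v i).2 = 1) ∧
  (∀ i, 1 ≤ detZ (v i) (v (i + 1))) ∧
  (⋃ i, coneOf (v i) (v (i + 1))) = Set.univ ∧
  ∀ i j, i ≠ j →
    interior (coneOf (v i) (v (i + 1))) ∩ interior (coneOf (v j) (v (j + 1))) = ∅

/-- `f(i) = det(v_{i−1}, v_i) + det(v_i, v_{i+1}) + det(v_{i+1}, v_{i−1})`. -/
def fanF (d : ℕ) (v : ZMod d → ℤ × ℤ) (i : ZMod d) : ℤ :=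
  detZ (v (i - 1)) (v i) + detZ (v i) (v (i + 1)) + detZ (v (i + 1)) (v (i - 1))

/-- LDP fan data: complete fan data with `f(i) ≥ 1` for all `i`. -/
def IsLDPFanData (d : ℕ) (v : ZMod d → ℤ × ℤ) : Prop :=
  IsCompleteFanData d v ∧ ∀ i, 1 ≤ fanF d v i

/-- The number of singular cones, i.e. indices `i` with `det(v_i, v_{i+1}) ≥ 2`. -/
noncomputable def numSingular (d : ℕ) (v : ZMod d → ℤ × ℤ) : ℕ :=
  {i : ZMod d | 2 ≤ detZ (v i) (v (i + 1))}.ncard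

/-- Equivalence of fan data: some `GL(2, ℤ)` matrix maps the vector set of one
bijectively onto the vector set of the other. -/
def FanEquiv {d₁ d₂ : ℕ} (v : ZMod d₁ → ℤ × ℤ) (w : ZMod d₂ → ℤ × ℤ) : Prop :=
  ∃ M : Matrix (Fin 2) (Fin 2) ℤ, IsUnit M.det ∧
    (fun u : ℤ × ℤ => (M 0 0 * u.1 + M 0 1 * u.2, M 1 0 * u.1 + M 1 1 * u.2)) ''
      Set.range v = Set.range w

/-- The cyclic sequence of length `d − 1` obtained by deleting the vector `v_k`:
it lists `v_{k+1}, v_{k+2}, …, v_{k+d−1}`. -/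
def deleteAt {d : ℕ} (v : ZMod d → ℤ × ℤ) (k : ZMod d) : ZMod (d - 1) → ℤ × ℤ :=
  fun i => v (k + 1 + (i.val : ZMod d))

/-- The cyclic sequence of length `d + 1` obtained by inserting `v_k + v_{k+1}`
between `v_k` and `v_{k+1}`. -/
def insertAt {d : ℕ} (v : ZMod d → ℤ × ℤ) (k : ZMod d) : ZMod (d + 1) → ℤ × ℤ :=
  fun i =>
    if i.val ≤ k.val then v ((i.val : ℕ) : ZMod d)
    else if i.val = k.val + 1 then v k + v (k + 1)
    else v ((i.val - 1 : ℕ) : ZMod d)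

def crossR (u w : ℝ × ℝ) : ℝ := u.1 * w.2 - u.2 * w.1
lemma crossR_toR2 (u w : ℤ × ℤ) : crossR (toR2 u) (toR2 w) = (detZ u w : ℝ) := by
  simp [crossR, toR2, detZ]

lemma mem_interior_cone {a b : ℤ × ℤ} (hab : 1 ≤ detZ a b) {z : ℝ × ℝ}
    (h1 : 0 < crossR (toR2 a) z) (h2 : 0 < crossR z (toR2 b)) :
    z ∈ interior (coneOf a b) := by
  set U : Set (ℝ × ℝ) := {x | 0 < crossR (toR2 a) x ∧ 0 < crossR x (toR2 b)} with hU
  have hopen : IsOpen U := by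
    have c1 : Continuous fun x : ℝ × ℝ => crossR (toR2 a) x := by
      unfold crossR; fun_prop
    have c2 : Continuous fun x : ℝ × ℝ => crossR x (toR2 b) := by
      unfold crossR; fun_prop
    exact IsOpen.inter (isOpen_lt continuous_const c1) (isOpen_lt continuous_const c2)
  have hsub : U ⊆ coneOf a b := by
    rintro x ⟨hx1, hx2⟩
    have hD : (0:ℝ) < (detZ a b : ℝ) := by exact_mod_cast (by omega : (0:ℤ) < detZ a b)
    refine ⟨crossR x (toR2 b) / (detZ a b : ℝ), crossR (toR2 a) x / (detZ a b : ℝ),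
      le_of_lt (div_pos hx2 hD), le_of_lt (div_pos hx1 hD), ?_⟩
    have hD' : (detZ a b : ℝ) ≠ 0 := ne_of_gt hD
    rw [Prod.ext_iff]
    constructor
    · show x.1 = _ * (toR2 a).1 + _ * (toR2 b).1
      field_simp
      simp only [crossR, toR2, detZ] at *
      push_cast
      ring
    · show x.2 = _ * (toR2 a).2 + _ * (toR2 b).2
      field_simp
      simp only [crossR, toR2, detZ] at *
      push_cast
      ring
  exact interior_maximal hsub hopen ⟨h1, h2⟩

lemma crossR_add_smul (a c e : ℤ × ℤ) (ε : ℝ) :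
    crossR (toR2 a) (toR2 c + ε • toR2 e) = (detZ a c : ℝ) + ε * (detZ a e : ℝ) := by
  simp [crossR, toR2, detZ, Prod.fst_add, Prod.snd_add]
  push_cast; ring

lemma crossR_add_smul' (a c e : ℤ × ℤ) (ε : ℝ) :
    crossR (toR2 c + ε • toR2 e) (toR2 a) = (detZ c a : ℝ) + ε * (detZ e a : ℝ) := by
  simp [crossR, toR2, detZ, Prod.fst_add, Prod.snd_add]
  push_cast; ring

lemma eps_pos_bound (A B : ℤ) (hA : 1 ≤ A) :
    0 < (A:ℝ) + (1 / (1 + |(B:ℝ)|)) * (B:ℝ) := by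
  have h1 : (0:ℝ) < 1 + |(B:ℝ)| := by positivity
  have h2 : (1 / (1 + |(B:ℝ)|)) * |(B:ℝ)| < 1 := by
    rw [div_mul_eq_mul_div, one_mul, div_lt_one h1]; linarith [abs_nonneg (B:ℝ)]
  have h3 : (1 / (1 + |(B:ℝ)|)) * (B:ℝ) ≥ -((1 / (1 + |(B:ℝ)|)) * |(B:ℝ)|) := by
    rw [← mul_neg]
    apply mul_le_mul_of_nonneg_left (neg_abs_le _) (by positivity)
  have hA' : (1:ℝ) ≤ (A:ℝ) := by exact_mod_cast hA
  nlinarith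

/-- (G1): no ray in the open interior of another cone. -/
lemma no_ray_in_interior {d : ℕ} {v : ZMod d → ℤ × ℤ} (h : IsCompleteFanData d v)
    {j l : ZMod d} (hjl : j ≠ l) :
    ¬ (1 ≤ detZ (v j) (v l) ∧ 1 ≤ detZ (v l) (v (j + 1))) := by
  rintro ⟨hA, hB⟩
  obtain ⟨-, -, hdet, -, hdisj⟩ := h
  set a := v j; set b := v (j+1); set c := v l; set e := v (l+1)
  set N : ℝ := 1 + |(detZ a e : ℝ)| + |(detZ e b : ℝ)| with hN
  have hNpos : (0:ℝ) < N := by positivity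
  set ε : ℝ := 1 / N with hε
  have hεpos : 0 < ε := by positivity
  set z : ℝ × ℝ := toR2 c + ε • toR2 e with hz
  have key : ∀ A B : ℤ, 1 ≤ A → |(B:ℝ)| ≤ N - 1 → 0 < (A:ℝ) + ε * (B:ℝ) := by
    intro A B h1 h2
    have : ε * (B:ℝ) ≥ -(ε * |(B:ℝ)|) := by
      rw [← mul_neg]; exact mul_le_mul_of_nonneg_left (neg_abs_le _) (le_of_lt hεpos)
    have hεN : ε * N = 1 := by rw [hε]; field_simp
    have h3 : ε * |(B:ℝ)| < 1 := by
      calc ε * |(B:ℝ)| ≤ ε * (N-1) := by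
            exact mul_le_mul_of_nonneg_left h2 (le_of_lt hεpos)
        _ < ε * N := by nlinarith
        _ = 1 := hεN
    have : (1:ℝ) ≤ (A:ℝ) := by exact_mod_cast h1
    nlinarith
  have hz1 : z ∈ interior (coneOf a b) := by
    apply mem_interior_cone (hdet j)
    · rw [hz, crossR_add_smul]
      refine key _ _ hA ?_
      have hNe : N - 1 = |(detZ a e : ℝ)| + |(detZ e b : ℝ)| := by rw [hN]; ring
      rw [hNe]; linarith [abs_nonneg ((detZ e b : ℝ))]
    · rw [hz, crossR_add_smul']
      refine key _ _ hB ?_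
      have hNe : N - 1 = |(detZ a e : ℝ)| + |(detZ e b : ℝ)| := by rw [hN]; ring
      rw [hNe]; linarith [abs_nonneg ((detZ a e : ℝ))]
  have hz2 : z ∈ interior (coneOf c e) := by
    apply mem_interior_cone (hdet l)
    · rw [hz, crossR_add_smul]
      have : detZ c c = 0 := by simp [detZ]; ring
      rw [this]
      have h1 : (0:ℝ) < (detZ c e : ℝ) := by exact_mod_cast (by linarith [hdet l] : (0:ℤ) < detZ c e)
      push_cast
      nlinarith
    · rw [hz, crossR_add_smul']
      have : detZ e e = 0 := by simp [detZ]; ring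
      rw [this]
      have h1 : (0:ℝ) < (detZ c e : ℝ) := by exact_mod_cast (by linarith [hdet l] : (0:ℤ) < detZ c e)
      simpa using h1
  have := hdisj j l hjl
  rw [Set.eq_empty_iff_forall_notMem] at this
  exact this z ⟨hz1, hz2⟩

/-- (G2): rays are pairwise distinct. -/
lemma rays_distinct {d : ℕ} {v : ZMod d → ℤ × ℤ} (h : IsCompleteFanData d v)
    {j l : ZMod d} (hjl : j ≠ l) : v j ≠ v l := by
  intro heq
  obtain ⟨-, -, hdet, -, hdisj⟩ := h
  set a := v j; set b := v (j+1); set c := v l; set e := v (l+1)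
  set N : ℝ := 1 + |(detZ e b : ℝ)| with hN
  have hNpos : (0:ℝ) < N := by positivity
  set ε : ℝ := 1 / N with hε
  have hεpos : 0 < ε := by positivity
  set z : ℝ × ℝ := toR2 c + ε • toR2 e with hz
  have hce : (0:ℝ) < (detZ c e : ℝ) := by exact_mod_cast (by linarith [hdet l] : (0:ℤ) < detZ c e)
  have hz2 : z ∈ interior (coneOf c e) := by
    apply mem_interior_cone (hdet l)
    · rw [hz, crossR_add_smul]
      have : detZ c c = 0 := by simp [detZ]; ring
      rw [this]; push_cast; nlinarith
    · rw [hz, crossR_add_smul']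
      have : detZ e e = 0 := by simp [detZ]; ring
      rw [this]; simpa using hce
  have hz1 : z ∈ interior (coneOf a b) := by
    apply mem_interior_cone (hdet j)
    · rw [hz, crossR_add_smul]
      have hac : detZ a c = 0 := by rw [show a = c from heq]; simp [detZ]; ring
      have hae : detZ a e = detZ c e := by rw [show a = c from heq]
      rw [hac, hae]; push_cast; nlinarith
    · rw [hz, crossR_add_smul']
      have hca : detZ c b = detZ a b := by rw [show a = c from heq]
      have hab : (1:ℝ) ≤ (detZ a b : ℝ) := by exact_mod_cast hdet j
      rw [hca]
      have habs : ε * (detZ e b : ℝ) ≥ -(ε * |(detZ e b : ℝ)|) := by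
        rw [← mul_neg]; exact mul_le_mul_of_nonneg_left (neg_abs_le _) (le_of_lt hεpos)
      have hεN : ε * N = 1 := by rw [hε]; field_simp
      have h3 : ε * |(detZ e b : ℝ)| < 1 := by
        have : |(detZ e b : ℝ)| ≤ N - 1 := by rw [hN]; ring_nf; rfl
        calc ε * |(detZ e b : ℝ)| ≤ ε * (N-1) := mul_le_mul_of_nonneg_left this (le_of_lt hεpos)
          _ < ε * N := by nlinarith
          _ = 1 := hεN
      nlinarith
  have := hdisj j l hjl
  rw [Set.eq_empty_iff_forall_notMem] at this
  exact this z ⟨hz1, hz2⟩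

lemma detZ_swap (u w : ℤ × ℤ) : detZ u w = - detZ w u := by simp [detZ]; ring
lemma detZ_self (u : ℤ × ℤ) : detZ u u = 0 := by simp [detZ]; ring
lemma detZ_neg_right (u z : ℤ × ℤ) : detZ u (-z) = - detZ u z := by simp [detZ]; ring
lemma detZ_neg_left (u z : ℤ × ℤ) : detZ (-u) z = - detZ u z := by simp [detZ]; ring

lemma plucker (a b c d : ℤ × ℤ) :
    detZ a b * detZ c d = detZ a c * detZ b d - detZ a d * detZ b c := by
  simp only [detZ]; ring

/-- Plücker-type: expansion in a unimodular basis (e₀,e₁). -/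
lemma detYX {e₀ e₁ : ℤ × ℤ} (h : detZ e₀ e₁ = 1) (z z' : ℤ × ℤ) :
    detZ z z' = detZ z e₁ * detZ e₀ z' - detZ e₀ z * detZ z' e₁ := by
  simp only [detZ] at h ⊢
  linear_combination (-(z.1 * z'.2 - z.2 * z'.1)) * h

/-- three-term relation: if det(a,b)=det(b,c)=1 then c = det(a,c)·b − a in det form. -/
lemma three_term {a b c : ℤ × ℤ} (h1 : detZ a b = 1) (h2 : detZ b c = 1) (z : ℤ × ℤ) :
    detZ z c = detZ a c * detZ z b - detZ z a := by
  simp only [detZ] at h1 h2 ⊢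
  linear_combination (-(z.1 * c.2 - z.2 * c.1)) * h1 + (a.1 * z.2 - a.2 * z.1) * h2

lemma cramer_fst (u v z : ℤ × ℤ) :
    detZ u v * z.1 = detZ u z * v.1 - detZ v z * u.1 := by simp [detZ]; ring
lemma cramer_snd (u v z : ℤ × ℤ) :
    detZ u v * z.2 = detZ u z * v.2 - detZ v z * u.2 := by simp [detZ]; ring

lemma vec_decomp {e₀ e₁ : ℤ × ℤ} (h : detZ e₀ e₁ = 1) (z : ℤ × ℤ) :
    z.1 = detZ e₀ z * e₁.1 - detZ e₁ z * e₀.1 ∧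
    z.2 = detZ e₀ z * e₁.2 - detZ e₁ z * e₀.2 := by
  constructor
  · have := cramer_fst e₀ e₁ z; rw [h, one_mul] at this; exact this
  · have := cramer_snd e₀ e₁ z; rw [h, one_mul] at this; exact this

lemma eq_or_neg_of_det_eq_zero {u z : ℤ × ℤ} (hu : Int.gcd u.1 u.2 = 1)
    (hz : Int.gcd z.1 z.2 = 1) (h : detZ u z = 0) : z = u ∨ z = -u := by
  obtain ⟨x, y, hxy⟩ := (Int.isCoprime_iff_gcd_eq_one.mpr hu)
  set c : ℤ := x * z.1 + y * z.2 with hc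
  have hd : u.1 * z.2 = u.2 * z.1 := by simpa [detZ, sub_eq_zero] using h
  have h1 : z.1 = c * u.1 := by
    have : z.1 * (x * u.1 + y * u.2) = c * u.1 := by
      simp only [hc]; linear_combination (-y) * hd
    rw [hxy] at this; linarith
  have h2 : z.2 = c * u.2 := by
    have : z.2 * (x * u.1 + y * u.2) = c * u.2 := by
      simp only [hc]; linear_combination x * hd
    rw [hxy] at this; linarith
  have hcd : c ∣ (Int.gcd z.1 z.2 : ℤ) := Int.dvd_coe_gcd ⟨u.1, h1⟩ ⟨u.2, h2⟩
  rw [hz] at hcd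
  rcases Int.isUnit_iff.mp (isUnit_of_dvd_one hcd) with hc1 | hc1
  · left; rw [Prod.ext_iff]; constructor <;> simp [h1, h2, hc1]
  · right; rw [Prod.ext_iff]; constructor <;> simp [h1, h2, hc1]

lemma not_two_le_of_dvd_prim {c : ℤ} {z : ℤ × ℤ} (hz : Int.gcd z.1 z.2 = 1)
    (h1 : c ∣ z.1) (h2 : c ∣ z.2) : ¬ (2 ≤ c) := by
  intro hc
  have : c ∣ (Int.gcd z.1 z.2 : ℤ) := Int.dvd_coe_gcd h1 h2
  rw [hz] at this
  have := Int.le_of_dvd one_pos this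
  omega

/-- The arithmetic chain structure extracted from an LDP fan with the
singular–nonsingular–singular pattern and no other singular cone. -/
structure Chain (m : ℕ) (e₀ e₁ : ℤ × ℤ) (w : ℕ → ℤ × ℤ) : Prop where
  hm : 2 ≤ m
  base : detZ e₀ e₁ = 1
  prim : ∀ k, 1 ≤ k → k ≤ m → Int.gcd (w k).1 (w k).2 = 1
  hq : 2 ≤ detZ e₁ (w 1)
  hp : 2 ≤ detZ (w m) e₀
  dchain : ∀ k, 1 ≤ k → k + 1 ≤ m → detZ (w k) (w (k + 1)) = 1
  f0 : -(detZ e₁ (w 1)) ≤ detZ (w 1) e₀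
  f1 : -(detZ e₁ (w 1)) ≤ detZ (w 2) e₁
  fk : ∀ k, 2 ≤ k → k + 1 ≤ m → detZ (w (k - 1)) (w (k + 1)) ≤ 1
  fm : -(detZ (w m) e₀) ≤ detZ e₀ (w (m - 1))
  flast : -(detZ (w m) e₀) ≤ detZ e₁ (w m)
  N0 : ∀ k, 1 ≤ k → k ≤ m → ¬(1 ≤ detZ e₀ (w k) ∧ 1 ≤ detZ (w k) e₁)
  Nm : ∀ k, 1 ≤ k → k ≤ m → ¬(1 ≤ detZ (w m) (w k) ∧ 1 ≤ detZ (w k) e₀)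
  Nc : ∀ k l, 1 ≤ k → k + 1 ≤ m → 1 ≤ l → l ≤ m →
    ¬(1 ≤ detZ (w k) (w l) ∧ 1 ≤ detZ (w l) (w (k + 1)))
  dist : ∀ k l, 1 ≤ k → k ≤ m → 1 ≤ l → l ≤ m → k ≠ l → w k ≠ w l

set_option maxHeartbeats 2000000 in
theorem chain_false : ∀ m : ℕ, ∀ e₀ e₁ : ℤ × ℤ, ∀ w : ℕ → ℤ × ℤ, Chain m e₀ e₁ w → False := by
  intro m
  induction m using Nat.strong_induction_on with
  | _ m IH =>
  intro e₀ e₁ w ch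
  have hm := ch.hm
  have hb := ch.base
  set q := detZ e₁ (w 1) with hqdef
  set p := detZ (w m) e₀ with hpdef
  clear_value q p
  have hq := ch.hq
  have hp := ch.hp
  -- coordinates
  have hY1 : detZ (w 1) e₁ = -q := by rw [hqdef, detZ_swap]
  have hXm : detZ e₀ (w m) = -p := by rw [hpdef, detZ_swap]
  -- X₁ ≤ q - 1
  have hX1q : detZ e₀ (w 1) ≤ q - 1 := by
    have h1 : detZ e₀ (w 1) ≤ q := by have := ch.f0; rw [detZ_swap (w 1) e₀] at this; linarith
    rcases lt_or_eq_of_le h1 with h | h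
    · omega
    · exfalso
      obtain ⟨hz1, hz2⟩ := vec_decomp hb (w 1)
      refine not_two_le_of_dvd_prim (ch.prim 1 le_rfl (by omega)) ?_ ?_ hq
      · rw [hz1, h, ← hqdef]; exact ⟨e₁.1 - e₀.1, by ring⟩
      · rw [hz2, h, ← hqdef]; exact ⟨e₁.2 - e₀.2, by ring⟩
  -- Yₘ ≤ p - 1
  have hYmp : detZ (w m) e₁ ≤ p - 1 := by
    have h1 : detZ (w m) e₁ ≤ p := by have := ch.flast; rw [detZ_swap e₁ (w m)] at this; linarith
    rcases lt_or_eq_of_le h1 with h | h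
    · omega
    · exfalso
      obtain ⟨hz1, hz2⟩ := vec_decomp hb (w m)
      refine not_two_le_of_dvd_prim (ch.prim m (by omega) le_rfl) ?_ ?_ hp
      · rw [hz1, hXm, detZ_swap e₁ (w m), h, ← hpdef]; exact ⟨e₀.1 - e₁.1, by ring⟩
      · rw [hz2, hXm, detZ_swap e₁ (w m), h, ← hpdef]; exact ⟨e₀.2 - e₁.2, by ring⟩
  by_cases hcon : ∃ k, 2 ≤ k ∧ k + 1 ≤ m ∧ detZ (w (k - 1)) (w (k + 1)) = 1
  · -- CONTRACTION CASE
    obtain ⟨k, hk2, hkm, hak⟩ := hcon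
    have hm3 : 3 ≤ m := by omega
    set w' : ℕ → ℤ × ℤ := fun j => if j < k then w j else w (j + 1) with hw'
    have hlt : ∀ j, j < k → w' j = w j := by intro j hj; simp [hw', hj]
    have hge : ∀ j, k ≤ j → w' j = w (j + 1) := by
      intro j hj; simp [hw', Nat.not_lt.mpr hj]
    have hda : detZ (w (k - 1)) (w k) = 1 := by
      have := ch.dchain (k - 1) (by omega) (by omega)
      rwa [show k - 1 + 1 = k from by omega] at this
    have hdb : detZ (w k) (w (k + 1)) = 1 := ch.dchain k (by omega) hkm
    -- the key identity: for all z, det(z, w (k+1)) = det(z, w k) - det(z, w (k-1))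
    have hkey : ∀ z, detZ z (w (k + 1)) = detZ z (w k) - detZ z (w (k - 1)) := by
      intro z
      have := three_term hda hdb z
      rw [hak, one_mul] at this
      linarith
    have hch' : Chain (m - 1) e₀ e₁ w' := by
      refine ⟨by omega, hb, ?_, ?_, ?_, ?_, ?_, ?_, ?_, ?_, ?_, ?_, ?_, ?_, ?_⟩
      · -- prim
        intro j hj1 hj2
        rcases lt_or_ge j k with h | h
        · rw [hlt j h]; exact ch.prim j hj1 (by omega)
        · rw [hge j h]; exact ch.prim (j + 1) (by omega) (by omega)
      · -- hq
        rw [hlt 1 (by omega)]; exact hq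
      · -- hp
        rw [hge (m - 1) (by omega), show m - 1 + 1 = m from by omega]; exact hp
      · -- dchain
        intro j hj1 hj2
        rcases lt_or_ge (j + 1) k with h | h
        · rw [hlt j (by omega), hlt (j + 1) h]; exact ch.dchain j hj1 (by omega)
        · rcases eq_or_lt_of_le h with h' | h'
          · -- h' : k = j + 1
            rw [hlt j (by omega), hge (j + 1) (by omega),
              show j = k - 1 from by omega,
              show k - 1 + 1 + 1 = k + 1 from by omega]
            exact hak
          · rw [hge j (by omega), hge (j + 1) (by omega)]
            exact ch.dchain (j + 1) (by omega) (by omega)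
      · -- f0
        rw [hlt 1 (by omega)]; exact ch.f0
      · -- f1
        rcases lt_or_ge 2 k with h | h
        · rw [hlt 1 (by omega), hlt 2 h]; exact ch.f1
        · have hk2' : k = 2 := by omega
          rw [hlt 1 (by omega), hge 2 (by omega)]
          have hkk := hkey e₁
          rw [hk2'] at hkk
          rw [show (2:ℕ) - 1 = 1 from by omega] at hkk
          have s3 := detZ_swap (w (2+1)) e₁
          have s2 := detZ_swap (w 2) e₁
          have := ch.f1
          omega
      · -- fk
        intro j hj2 hjm
        rcases lt_or_ge (j + 1) k with h | h
        · rw [hlt (j - 1) (by omega), hlt (j + 1) h]; exact ch.fk j hj2 (by omega)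
        · rcases eq_or_lt_of_le h with h' | h'
          · -- h' : k = j + 1
            rw [hlt (j - 1) (by omega), hge (j + 1) (by omega),
              show j - 1 = k - 2 from by omega, show j + 1 + 1 = k + 1 from by omega]
            have hz := hkey (w (k - 2))
            have hda' : detZ (w (k - 2)) (w (k - 1)) = 1 := by
              have := ch.dchain (k - 2) (by omega) (by omega)
              rwa [show k - 2 + 1 = k - 1 from by omega] at this
            have hfk' : detZ (w (k - 2)) (w k) ≤ 1 := by
              have := ch.fk (k - 1) (by omega) (by omega)
              rwa [show k - 1 - 1 = k - 2 from by omega, show k - 1 + 1 = k from by omega] at this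
            omega
          · -- k ≤ j
            have hkj : k ≤ j := by omega
            rcases eq_or_lt_of_le hkj with hjk | hjk
            · -- hjk : k = j
              rw [hlt (j - 1) (by omega), hge (j + 1) (by omega), ← hjk,
                show k + 1 + 1 = k + 2 from by omega]
              have hz := hkey (w (k + 2))
              have hd2 : detZ (w (k + 1)) (w (k + 2)) = 1 := by
                have := ch.dchain (k + 1) (by omega) (by omega)
                rwa [show k + 1 + 1 = k + 2 from by omega] at this
              have hfk2 : detZ (w k) (w (k + 2)) ≤ 1 := by
                have := ch.fk (k + 1) (by omega) (by omega)
                rwa [show k + 1 - 1 = k from by omega, show k + 1 + 1 = k + 2 from by omega] at this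
              have s1 := detZ_swap (w (k + 2)) (w (k + 1))
              have s2 := detZ_swap (w (k + 2)) (w k)
              have s3 := detZ_swap (w (k + 2)) (w (k - 1))
              omega
            · -- j ≥ k + 1
              rw [hge (j - 1) (by omega), hge (j + 1) (by omega),
                show j - 1 + 1 = j from by omega]
              have := ch.fk (j + 1) (by omega) (by omega)
              rwa [show j + 1 - 1 = j from by omega] at this
      · -- fm
        have hplast : detZ (w' (m - 1)) e₀ = p := by
          rw [hge (m - 1) (by omega), show m - 1 + 1 = m from by omega]
          exact hpdef.symm
        rw [hplast]
        rcases lt_or_ge (m - 1 - 1) k with h | h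
        · -- k = m - 1 (since k ≤ m-1 and m-2 < k)
          have hk : k = m - 1 := by omega
          rw [hlt (m - 1 - 1) h]
          have hz := hkey e₀
          rw [hk, show m - 1 + 1 = m from by omega, show m - 1 - 1 = m - 1 - 1 from rfl, hXm] at hz
          have := ch.fm
          omega
        · rw [hge (m - 1 - 1) h, show m - 1 - 1 + 1 = m - 1 from by omega]
          have := ch.fm
          omega
      · -- flast
        rw [hge (m - 1) (by omega), show m - 1 + 1 = m from by omega]; exact ch.flast
      · -- N0
        intro j hj1 hj2
        rcases lt_or_ge j k with h | h
        · rw [hlt j h]; exact ch.N0 j hj1 (by omega)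
        · rw [hge j h]; exact ch.N0 (j + 1) (by omega) (by omega)
      · -- Nm
        intro j hj1 hj2
        have hlast : w' (m - 1) = w m := by
          rw [hge (m - 1) (by omega), show m - 1 + 1 = m from by omega]
        rw [hlast]
        rcases lt_or_ge j k with h | h
        · rw [hlt j h]; exact ch.Nm j hj1 (by omega)
        · rw [hge j h]; exact ch.Nm (j + 1) (by omega) (by omega)
      · -- Nc
        intro j l hj1 hj2 hl1 hl2
        have hzl : ∃ l', 1 ≤ l' ∧ l' ≤ m ∧ l' ≠ k ∧ w' l = w l' := by
          rcases lt_or_ge l k with h | h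
          · exact ⟨l, hl1, by omega, by omega, hlt l h⟩
          · exact ⟨l + 1, by omega, by omega, by omega, hge l h⟩
        obtain ⟨l', hl'1, hl'2, hl'k, hl'⟩ := hzl
        rw [hl']
        rcases lt_or_ge (j + 1) k with h | h
        · rw [hlt j (by omega), hlt (j + 1) h]; exact ch.Nc j l' hj1 (by omega) hl'1 hl'2
        · rcases eq_or_lt_of_le h with h' | h'
          · -- merged cone, h' : k = j + 1
            rw [hlt j (by omega), hge (j + 1) (by omega),
              show j = k - 1 from by omega,
              show k - 1 + 1 + 1 = k + 1 from by omega]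
            rintro ⟨hβ, hγ⟩
            have hz := hkey (w l')
            have hN1 := ch.Nc (k - 1) l' (by omega) (by omega) hl'1 hl'2
            rw [show k - 1 + 1 = k from by omega] at hN1

            have hwlk : detZ (w l') (w k) ≤ 0 := by
              by_contra hcon'
              exact hN1 ⟨hβ, by omega⟩
            have hN2 := ch.Nc k l' (by omega) (by omega) hl'1 hl'2
            have hwkl : detZ (w k) (w l') ≤ 0 := by
              by_contra hcon'
              exact hN2 ⟨by omega, hγ⟩
            have h0 : detZ (w k) (w l') = 0 := by
              rw [detZ_swap (w l') (w k)] at hwlk; omega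
            rcases eq_or_neg_of_det_eq_zero (ch.prim k (by omega) (by omega))
                (ch.prim l' hl'1 hl'2) h0 with he | he
            · exact ch.dist l' k hl'1 hl'2 (by omega) (by omega) hl'k he
            · rw [he, detZ_neg_right, hda] at hβ; omega
          · rw [hge j (by omega), hge (j + 1) (by omega)]
            exact ch.Nc (j + 1) l' (by omega) (by omega) hl'1 hl'2
      · -- dist
        intro j l hj1 hj2 hl1 hl2 hjl
        rcases lt_or_ge j k with h | h <;> rcases lt_or_ge l k with h'' | h''
        · rw [hlt j h, hlt l h'']; exact ch.dist j l hj1 (by omega) hl1 (by omega) hjl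
        · rw [hlt j h, hge l h'']; exact ch.dist j (l+1) hj1 (by omega) (by omega) (by omega) (by omega)
        · rw [hge j h, hlt l h'']; exact ch.dist (j+1) l (by omega) (by omega) hl1 (by omega) (by omega)
        · rw [hge j h, hge l h'']; exact ch.dist (j+1) (l+1) (by omega) (by omega) (by omega) (by omega) (by omega)
    exact IH (m - 1) (by omega) e₀ e₁ w' hch'
  · -- NO CONTRACTION: all interior a ≤ 0
    push_neg at hcon
    have hint : ∀ k, 2 ≤ k → k + 1 ≤ m → detZ (w (k - 1)) (w (k + 1)) ≤ 0 := by
      intro k h1 h2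
      have := ch.fk k h1 h2
      have := hcon k h1 h2
      omega
    -- base cases
    by_cases hm2 : m = 2
    · -- m = 2
      subst hm2
      have hd12 : detZ (w 1) (w 2) = 1 := ch.dchain 1 (by omega) (by omega)
      have hyx := detYX hb (w 1) (w 2)
      rw [hd12, hY1, hXm] at hyx
      -- hyx : 1 = -q * -p - detZ e₀ (w 1) * detZ (w 2) e₁
      have hprod : detZ e₀ (w 1) * detZ (w 2) e₁ = q * p - 1 := by linear_combination hyx
      have hf1 : -q ≤ detZ (w 2) e₁ := by have := ch.f1; omega
      have hfm : -p ≤ detZ e₀ (w 1) := by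
        have := ch.fm
        rw [show (2:ℕ) - 1 = 1 from by omega] at this
        omega
      set X1 := detZ e₀ (w 1) with hX1def
      set Y2 := detZ (w 2) e₁ with hY2def
      clear_value X1 Y2
      rcases lt_trichotomy X1 0 with hx | hx | hx
      · -- X1 ≤ -1
        have hy : Y2 ≤ -1 := by nlinarith
        rcases eq_or_lt_of_le hfm with hXp | hXp
        · -- X1 = -p : divisibility contradiction
          have h1 : (1:ℤ) = p * (q + Y2) := by linear_combination hprod + Y2 * hXp
          have : (p:ℤ) ∣ 1 := ⟨q + Y2, h1⟩
          have := Int.le_of_dvd one_pos this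
          omega
        · -- -p < X1 ≤ -1
          have hb1 : -X1 ≤ p - 1 := by omega
          have hb2 : -Y2 ≤ q := by omega
          have : (-X1) * (-Y2) ≤ (p - 1) * q :=
            mul_le_mul hb1 hb2 (by omega) (by omega)
          nlinarith
      · nlinarith
      · -- X1 ≥ 1
        have hy : 1 ≤ Y2 := by nlinarith
        have : X1 * Y2 ≤ (q - 1) * (p - 1) :=
          mul_le_mul hX1q hYmp (by omega) (by omega)
        nlinarith
    · by_cases hm3 : m = 3
      · -- m = 3
        subst hm3
        have ha2 : detZ (w 1) (w 3) ≤ 0 := by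
          have := hint 2 (by omega) (by omega)
          rwa [show (2:ℕ) - 1 = 1 from by omega, show (2:ℕ) + 1 = 3 from by omega] at this
        have hd1 : detZ (w 1) (w 2) = 1 := ch.dchain 1 (by omega) (by omega)
        have hd2 : detZ (w 2) (w 3) = 1 := by
          have := ch.dchain 2 (by omega) (by omega)
          rwa [show (2:ℕ) + 1 = 3 from by omega] at this
        have hyx := detYX hb (w 1) (w 3)
        rw [hY1, hXm] at hyx
        -- hyx : detZ (w 1) (w 3) = -q * -p - X1 * Y3
        set X1 := detZ e₀ (w 1) with hX1def
        set Y3 := detZ (w 3) e₁ with hY3def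
        clear_value X1 Y3
        have hprod : q * p ≤ X1 * Y3 := by nlinarith [hyx, ha2]
        rcases lt_trichotomy X1 0 with hx | hx | hx
        · -- X1 ≤ -1
          have hy : Y3 ≤ -1 := by nlinarith
          rcases eq_or_lt_of_le ha2 with ha2' | ha2'
          · -- impossible; ha2' : det < 0? eq_or_lt of (a ≤ 0) gives a = 0 ∨ a < 0
            -- ha2' : detZ (w 1) (w 3) = 0
            rcases eq_or_neg_of_det_eq_zero (ch.prim 1 (by omega) (by omega))
                (ch.prim 3 (by omega) (by omega)) ha2' with he | he
            · exact ch.dist 3 1 (by omega) (by omega) (by omega) (by omega) (by omega) he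
            · have : Y3 = q := by rw [hY3def, he, detZ_neg_left, hY1]; ring
              omega
          · -- a2 ≤ -1
            have hX2eq : detZ (w 1) (w 3) * detZ e₀ (w 2) = X1 - p := by
              have hpl := plucker (w 2) e₀ (w 1) (w 3)
              rw [detZ_swap (w 2) e₀, detZ_swap (w 2) (w 1), hd1, hd2, hXm] at hpl
              linear_combination -hpl - hX1def
            have hY2eq : detZ (w 1) (w 3) * detZ (w 2) e₁ = Y3 - q := by
              have hpl := plucker (w 2) e₁ (w 1) (w 3)
              rw [detZ_swap (w 2) (w 1), hd1, hd2, detZ_swap e₁ (w 3), ← hY3def] at hpl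
              linear_combination hpl + hqdef
            have hX2pos : 1 ≤ detZ e₀ (w 2) := by nlinarith [hX2eq, ha2', hx, hp]
            have hY2pos : 1 ≤ detZ (w 2) e₁ := by nlinarith [hY2eq, ha2', hy, hq]
            exact ch.N0 2 (by omega) (by omega) ⟨hX2pos, hY2pos⟩
        · nlinarith
        · -- X1 ≥ 1
          have hy : 1 ≤ Y3 := by nlinarith
          have : X1 * Y3 ≤ (q - 1) * (p - 1) :=
            mul_le_mul hX1q hYmp (by omega) (by omega)
          nlinarith
      · -- m ≥ 4
        have hm4 : 4 ≤ m := by omega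
        have ha2 : detZ (w 1) (w 3) ≤ 0 := by
          have := hint 2 (by omega) (by omega)
          rwa [show (2:ℕ) - 1 = 1 from by omega, show (2:ℕ) + 1 = 3 from by omega] at this
        have ha3 : detZ (w 2) (w 4) ≤ 0 := by
          have := hint 3 (by omega) (by omega)
          rwa [show (3:ℕ) - 1 = 2 from by omega, show (3:ℕ) + 1 = 4 from by omega] at this
        have hd1 : detZ (w 1) (w 2) = 1 := ch.dchain 1 (by omega) (by omega)
        have hd2 : detZ (w 2) (w 3) = 1 := by
          have := ch.dchain 2 (by omega) (by omega)
          rwa [show (2:ℕ) + 1 = 3 from by omega] at this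
        have hd3 : detZ (w 3) (w 4) = 1 := by
          have := ch.dchain 3 (by omega) (by omega)
          rwa [show (3:ℕ) + 1 = 4 from by omega] at this
        set X1 := detZ e₀ (w 1) with hX1def
        clear_value X1
        rcases eq_or_lt_of_le ha2 with ha2' | ha2'
        · -- a2 = 0 : w3 = ±w1
          rcases eq_or_neg_of_det_eq_zero (ch.prim 1 (by omega) (by omega))
              (ch.prim 3 (by omega) (by omega)) ha2' with he | he
          · exact ch.dist 3 1 (by omega) (by omega) (by omega) (by omega) (by omega) he
          · -- w3 = -w1
            have hY3 : detZ (w 3) e₁ = q := by rw [he, detZ_neg_left, hY1]; ring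
            have hX3 : detZ e₀ (w 3) = -X1 := by rw [he, detZ_neg_right, hX1def]
            have hX1nn : 0 ≤ X1 := by
              have := ch.N0 3 (by omega) (by omega)
              rw [hY3, hX3] at this
              by_contra hcon'
              exact this ⟨by omega, by omega⟩
            have hX1pos : 1 ≤ X1 := by
              rcases eq_or_lt_of_le hX1nn with h0 | h0
              · exfalso
                obtain ⟨hz1, hz2⟩ := vec_decomp hb (w 1)
                rw [← hX1def, ← h0] at hz1 hz2
                refine not_two_le_of_dvd_prim (ch.prim 1 (by omega) (by omega)) ?_ ?_ hq
                · rw [hz1, ← hqdef]; exact ⟨-e₀.1, by ring⟩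
                · rw [hz2, ← hqdef]; exact ⟨-e₀.2, by ring⟩
              · omega
            have hwm3 : detZ (w m) (w 3) ≤ 0 := by
              have := ch.Nm 3 (by omega) (by omega)
              have h30 : 1 ≤ detZ (w 3) e₀ := by
                rw [detZ_swap (w 3) e₀, hX3]; omega
              by_contra hcon'
              exact this ⟨by omega, h30⟩
            have hyx := detYX hb (w m) (w 3)
            rw [hY3, hX3, hXm] at hyx
            -- hyx : detZ (w m) (w 3) = Ym * -X1 - (-p) * q
            have hprod : q * p ≤ X1 * detZ (w m) e₁ := by nlinarith [hyx, hwm3]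
            have hy : 1 ≤ detZ (w m) e₁ := by nlinarith
            have hbd : X1 * detZ (w m) e₁ ≤ (q - 1) * (p - 1) :=
              mul_le_mul hX1q hYmp (by omega) (by omega)
            nlinarith
        · -- a2 ≤ -1
          rcases eq_or_lt_of_le ha3 with ha3' | ha3'
          · -- a3 = 0 : w4 = ±w2
            rcases eq_or_neg_of_det_eq_zero (ch.prim 2 (by omega) (by omega))
                (ch.prim 4 (by omega) (by omega)) ha3' with he | he
            · exact ch.dist 4 2 (by omega) (by omega) (by omega) (by omega) (by omega) he
            · -- w4 = -w2
              by_cases hm4' : m = 4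
              · subst hm4'
                have hX2 : detZ e₀ (w 2) = p := by
                  have : detZ e₀ (w 4) = - detZ e₀ (w 2) := by rw [he, detZ_neg_right]
                  rw [hXm] at this
                  omega
                have hY2m : detZ (w 4) e₁ = - detZ (w 2) e₁ := by rw [he, detZ_neg_left]
                have hY2np : detZ (w 2) e₁ ≤ 0 := by
                  have := ch.N0 2 (by omega) (by omega)
                  rw [hX2] at this
                  by_contra hcon'
                  exact this ⟨by omega, by omega⟩
                have hyx := detYX hb (w 1) (w 2)
                rw [hd1, hY1, hX2] at hyx
                -- hyx : 1 = -q * p - X1 * detZ (w 2) e₁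
                set Y2 := detZ (w 2) e₁ with hY2def
                clear_value Y2
                have hprod : X1 * (-Y2) = q * p + 1 := by
                  linear_combination -hyx - Y2 * hX1def
                have hYm4 : -Y2 ≤ p - 1 := by
                  have := hYmp
                  rw [hY2m] at this
                  omega
                have hy : 1 ≤ -Y2 := by nlinarith
                have hx : 1 ≤ X1 := by nlinarith
                have : X1 * (-Y2) ≤ (q - 1) * (p - 1) :=
                  mul_le_mul hX1q hYm4 (by omega) (by omega)
                nlinarith
              · -- m ≥ 5
                have hm5 : 5 ≤ m := by omega
                have ha4 : detZ (w 3) (w 5) ≤ 0 := by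
                  have := hint 4 (by omega) (by omega)
                  rwa [show (4:ℕ) - 1 = 3 from by omega, show (4:ℕ) + 1 = 5 from by omega] at this
                have hd4 : detZ (w 4) (w 5) = 1 := by
                  have := ch.dchain 4 (by omega) (by omega)
                  rwa [show (4:ℕ) + 1 = 5 from by omega] at this
                have h41 : detZ (w 4) (w 1) = 1 := by
                  rw [he, detZ_neg_left, detZ_swap (w 2) (w 1), hd1]; ring
                have h14 : detZ (w 1) (w 4) = -1 := by
                  rw [he, detZ_neg_right, hd1]
                have h15 : detZ (w 1) (w 5) = detZ (w 3) (w 5) * detZ (w 1) (w 4) - detZ (w 1) (w 3) :=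
                  three_term hd3 hd4 (w 1)
                rw [h14] at h15
                have hNc := ch.Nc 4 1 (by omega) (by omega) (by omega) (by omega)
                rw [show (4:ℕ) + 1 = 5 from by omega] at hNc
                have : detZ (w 1) (w 5) ≤ 0 := by
                  by_contra hcon'
                  exact hNc ⟨by omega, by omega⟩
                omega
          · -- a3 ≤ -1
            have h14 : detZ (w 1) (w 4) = detZ (w 2) (w 4) * detZ (w 1) (w 3) - 1 := by
              have := three_term hd2 hd3 (w 1)
              rwa [hd1] at this
            have hge1 : 1 ≤ detZ (w 2) (w 4) * detZ (w 1) (w 3) := by nlinarith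
            rcases eq_or_lt_of_le hge1 with heq1 | hgt1
            · -- product = 1: a2 = a3 = -1, det(w1,w4) = 0
              have h140 : detZ (w 1) (w 4) = 0 := by omega
              rcases eq_or_neg_of_det_eq_zero (ch.prim 1 (by omega) (by omega))
                  (ch.prim 4 (by omega) (by omega)) h140 with he | he
              · exact ch.dist 4 1 (by omega) (by omega) (by omega) (by omega) (by omega) he
              · -- w4 = -w1 : contradicts det(w3,w4)=1 and a2 ≤ -1
                have : detZ (w 3) (w 4) = detZ (w 1) (w 3) := by
                  rw [he, detZ_neg_right, detZ_swap (w 3) (w 1)]; ring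
                omega
            · -- product ≥ 2: Nc 3 1 contradiction
              have hNc := ch.Nc 3 1 (by omega) (by omega) (by omega) (by omega)
              rw [show (3:ℕ) + 1 = 4 from by omega] at hNc
              have h31 : 1 ≤ detZ (w 3) (w 1) := by
                rw [detZ_swap (w 3) (w 1)]; omega
              exact hNc ⟨h31, by omega⟩

set_option maxHeartbeats 1000000 in
/-- Lemma 3.1 (2): if in LDP fan data the cones `σ_{i−1}` and `σ_{i+1}` are singular
while `σ_i` is nonsingular, then some further cone `σ_j` with `j ∉ {i−1, i, i+1}`
is singular; in particular there are at least three singular cones. -/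
theorem singular_nonsingular_singular_third (d : ℕ) (v : ZMod d → ℤ × ℤ)
    (hd : 4 ≤ d) (h : IsLDPFanData d v) (i : ZMod d)
    (h1 : 2 ≤ detZ (v (i - 1)) (v i))
    (h2 : detZ (v i) (v (i + 1)) = 1)
    (h3 : 2 ≤ detZ (v (i + 1)) (v (i + 2))) :
    (∃ j : ZMod d, j ≠ i - 1 ∧ j ≠ i ∧ j ≠ i + 1 ∧ 2 ≤ detZ (v j) (v (j + 1))) ∧
    3 ≤ numSingular d v := by
  haveI : NeZero d := ⟨by omega⟩
  obtain ⟨hC, hF⟩ := h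
  have hprim := hC.2.1
  have hdet := hC.2.2.1
  have hcast : ∀ a b : ℕ, a < d → b < d → ((a : ZMod d) = (b : ZMod d)) → a = b := by
    intro a b ha hb hab
    have e1 : ((a : ZMod d)).val = a := ZMod.val_cast_of_lt ha
    have e2 : ((b : ZMod d)).val = b := ZMod.val_cast_of_lt hb
    rw [hab] at e1; omega
  have hne0 : ∀ a : ℕ, 0 < a → a < d → ((a : ZMod d) ≠ 0) := by
    intro a ha1 ha2 h0
    have : a = 0 := hcast a 0 ha2 (by omega) (by simpa using h0)
    omega
  have main : ∃ j : ZMod d, j ≠ i - 1 ∧ j ≠ i ∧ j ≠ i + 1 ∧ 2 ≤ detZ (v j) (v (j + 1)) := by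
    by_contra hno
    push_neg at hno
    set w : ℕ → ℤ × ℤ := fun k => v (i + 1 + (k : ZMod d)) with hwdef
    have wknorm : ∀ (k : ℕ) (t : ZMod d), i + 1 + (k : ZMod d) = t → w k = v t := by
      intro k t ht; show v _ = _; rw [ht]
    have e1 : w 1 = v (i + 2) := wknorm 1 (i + 2) (by push_cast; ring)
    have e2 : w 2 = v (i + 3) := wknorm 2 (i + 3) (by push_cast; ring)
    have em : w (d - 2) = v (i - 1) := by
      refine wknorm (d - 2) (i - 1) ?_
      have : ((d - 2 : ℕ) : ZMod d) = (d : ZMod d) - 2 := by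
        push_cast [Nat.cast_sub (show 2 ≤ d by omega)]; ring
      rw [this, ZMod.natCast_self]; ring
    have em1 : w (d - 2 - 1) = v (i - 2) := by
      refine wknorm (d - 2 - 1) (i - 2) ?_
      have h0 : d - 2 - 1 = d - 3 := by omega
      have : ((d - 3 : ℕ) : ZMod d) = (d : ZMod d) - 3 := by
        push_cast [Nat.cast_sub (show 3 ≤ d by omega)]; ring
      rw [h0, this, ZMod.natCast_self]; ring
    -- the main chain determinant condition
    have hone : ∀ k : ℕ, 1 ≤ k → k + 1 ≤ d - 2 →
        detZ (v (i + 1 + (k : ZMod d))) (v (i + 1 + (k : ZMod d) + 1)) = 1 := by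
      intro k hk1 hk2
      set j : ZMod d := i + 1 + (k : ZMod d) with hjdef
      have hj1 : j ≠ i - 1 := by
        intro hcontra
        have : ((k + 2 : ℕ) : ZMod d) = 0 := by push_cast; linear_combination hcontra
        exact hne0 (k + 2) (by omega) (by omega) this
      have hj2 : j ≠ i := by
        intro hcontra
        have : ((k + 1 : ℕ) : ZMod d) = 0 := by push_cast; linear_combination hcontra
        exact hne0 (k + 1) (by omega) (by omega) this
      have hj3 : j ≠ i + 1 := by
        intro hcontra
        have : ((k : ℕ) : ZMod d) = 0 := by push_cast; linear_combination hcontra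
        exact hne0 k (by omega) (by omega) this
      have := hno j hj1 hj2 hj3
      have := hdet j
      omega
    have hch : Chain (d - 2) (v i) (v (i + 1)) w := by
      refine ⟨by omega, h2, fun k _ _ => hprim _, ?_, ?_, ?_, ?_, ?_, ?_, ?_, ?_, ?_, ?_, ?_, ?_⟩
      · -- hq
        rw [e1]; exact h3
      · -- hp
        rw [em]
        have e : i - 1 + 1 = i := by ring
        rw [← e] at h1
        rw [e] at h1
        exact h1
      · -- dchain
        intro k hk1 hk2
        have ek : w (k + 1) = v (i + 1 + (k : ZMod d) + 1) :=
          wknorm (k + 1) _ (by push_cast; ring)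
        rw [ek]
        exact hone k hk1 hk2
      · -- f0
        rw [e1]
        have hfan := hF (i + 1)
        rw [fanF, show i + 1 - 1 = i from by ring, show i + 1 + 1 = i + 2 from by ring] at hfan
        rw [h2] at hfan
        omega
      · -- f1
        rw [e1, e2]
        have hfan := hF (i + 2)
        rw [fanF, show i + 2 - 1 = i + 1 from by ring, show i + 2 + 1 = i + 3 from by ring] at hfan
        have hd23 : detZ (v (i + 2)) (v (i + 3)) = 1 := by
          have := hone 1 (by omega) (by omega)
          rw [show i + 1 + ((1 : ℕ) : ZMod d) = i + 2 from by push_cast; ring] at this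
          rw [show i + 2 + 1 = i + 3 from by ring] at this
          exact this
        rw [hd23] at hfan
        omega
      · -- fk
        intro k hk2 hkm
        set j : ZMod d := i + 1 + (k : ZMod d) with hjdef
        have eprev : w (k - 1) = v (j - 1) := by
          refine wknorm (k - 1) (j - 1) ?_
          rw [hjdef]
          push_cast [Nat.cast_sub (show 1 ≤ k by omega)]
          ring
        have enext : w (k + 1) = v (j + 1) := wknorm (k + 1) _ (by rw [hjdef]; push_cast; ring)
        rw [eprev, enext]
        have hfan := hF j
        rw [fanF] at hfan
        have hdjj : detZ (v (j - 1)) (v j) = 1 := by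
          have := hone (k - 1) (by omega) (by omega)
          rw [show i + 1 + ((k - 1 : ℕ) : ZMod d) = j - 1 from by
            rw [hjdef]; push_cast [Nat.cast_sub (show 1 ≤ k by omega)]; ring] at this
          rw [show j - 1 + 1 = j from by ring] at this
          exact this
        have hdj : detZ (v j) (v (j + 1)) = 1 := hone k (by omega) hkm
        rw [hdjj, hdj] at hfan
        have := detZ_swap (v (j - 1)) (v (j + 1))
        omega
      · -- fm
        rw [em, em1]
        have hfan := hF (i - 1)
        rw [fanF, show i - 1 - 1 = i - 2 from by ring, show i - 1 + 1 = i from by ring] at hfan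
        have hd2' : detZ (v (i - 2)) (v (i - 1)) = 1 := by
          have := hone (d - 3) (by omega) (by omega)
          rw [show i + 1 + ((d - 3 : ℕ) : ZMod d) = i - 2 from by
            push_cast [Nat.cast_sub (show 3 ≤ d by omega)]
            rw [ZMod.natCast_self]; ring] at this
          rw [show i - 2 + 1 = i - 1 from by ring] at this
          exact this
        rw [hd2'] at hfan
        omega
      · -- flast
        rw [em]
        have hfan := hF i
        rw [fanF] at hfan
        rw [h2] at hfan
        omega
      · -- N0
        intro k hk1 hk2
        have hil : i ≠ i + 1 + (k : ZMod d) := by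
          intro hcontra
          have : ((k + 1 : ℕ) : ZMod d) = 0 := by push_cast; linear_combination -hcontra
          exact hne0 (k + 1) (by omega) (by omega) this
        exact no_ray_in_interior hC hil
      · -- Nm
        intro k hk1 hk2
        rcases eq_or_lt_of_le hk2 with hkm | hkm
        · rw [hkm, detZ_self]
          rintro ⟨hc, -⟩; omega
        · rw [em]
          have hil : i - 1 ≠ i + 1 + (k : ZMod d) := by
            intro hcontra
            have : ((k + 2 : ℕ) : ZMod d) = 0 := by push_cast; linear_combination -hcontra
            exact hne0 (k + 2) (by omega) (by omega) this
          have G1 := no_ray_in_interior hC hil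
          rw [show i - 1 + 1 = i from by ring] at G1
          exact G1
      · -- Nc
        intro k l hk1 hk2 hl1 hl2
        by_cases hlk : l = k
        · rw [hlk, detZ_self]
          rintro ⟨hc, -⟩; omega
        · by_cases hlk1 : l = k + 1
          · rw [hlk1, detZ_self]
            rintro ⟨-, hc⟩; omega
          · have hil : i + 1 + (k : ZMod d) ≠ i + 1 + (l : ZMod d) := by
              intro hcontra
              have : ((k : ℕ) : ZMod d) = ((l : ℕ) : ZMod d) := by
                linear_combination hcontra
              exact hlk ((hcast l k (by omega) (by omega) this.symm))
            have G1 := no_ray_in_interior hC hil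
            have ek : w (k + 1) = v (i + 1 + (k : ZMod d) + 1) :=
              wknorm (k + 1) _ (by push_cast; ring)
            rw [ek]
            exact G1
      · -- dist
        intro k l hk1 hk2 hl1 hl2 hkl
        have hil : i + 1 + (k : ZMod d) ≠ i + 1 + (l : ZMod d) := by
          intro hcontra
          have : ((k : ℕ) : ZMod d) = ((l : ℕ) : ZMod d) := by
            linear_combination hcontra
          exact hkl (hcast k l (by omega) (by omega) this)
        exact rays_distinct hC hil
    exact chain_false (d - 2) (v i) (v (i + 1)) w hch
  refine ⟨main, ?_⟩
  obtain ⟨j, hj1, hj2, hj3, hjdet⟩ := main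
  have hSm1 : (i - 1) ∈ {i' : ZMod d | 2 ≤ detZ (v i') (v (i' + 1))} := by
    simp only [Set.mem_setOf_eq, show i - 1 + 1 = i from by ring]
    exact h1
  have hSp1 : (i + 1) ∈ {i' : ZMod d | 2 ≤ detZ (v i') (v (i' + 1))} := by
    simp only [Set.mem_setOf_eq, show i + 1 + 1 = i + 2 from by ring]
    exact h3
  have hSj : j ∈ {i' : ZMod d | 2 ≤ detZ (v i') (v (i' + 1))} := hjdet
  have hne12 : i - 1 ≠ i + 1 := by
    intro hcontra
    have : ((2 : ℕ) : ZMod d) = 0 := by push_cast; linear_combination -hcontra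
    exact hne0 2 (by omega) (by omega) this
  have hcard : ({i - 1, i + 1, j} : Finset (ZMod d)).card = 3 := by
    rw [Finset.card_insert_of_notMem (by simp [hne12, hj1.symm, Ne.symm hj1]),
      Finset.card_insert_of_notMem (by simp [Ne.symm hj3]), Finset.card_singleton]
  have hsub : ↑({i - 1, i + 1, j} : Finset (ZMod d)) ⊆
      {i' : ZMod d | 2 ≤ detZ (v i') (v (i' + 1))} := by
    intro x hx
    simp only [Finset.coe_insert, Finset.coe_singleton, Set.mem_insert_iff,
      Set.mem_singleton_iff] at hx
    rcases hx with rfl | rfl | rfl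
    · exact hSm1
    · exact hSp1
    · exact hSj
  have := Set.ncard_le_ncard hsub (Set.toFinite _)
  rw [Set.ncard_coe_finset, hcard] at this
  exact this
end

section
/- There is no LDP fan data v_1, …, v_5 of length 5 satisfying det(v_1, v_2) ≥ 2, det(v_2, v_3) = 1, det(v_3, v_4) ≥ 2, det(v_4, v_5) = 1, and det(v_5, v_1) ≥ 2. In other words, there is no toric log del Pezzo surface of Picard number three whose singular points are exactly the torus-fixed points of σ_1, σ_3 and σ_5. -/
lemma mem_interior_cone_s13 (u w x : ℤ × ℤ) (huw : 1 ≤ detZ u w)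
    (h1 : 1 ≤ detZ u x) (h2 : 1 ≤ detZ x w) : toR2 x ∈ interior (coneOf u w) := by
  have hD : (0:ℝ) < (u.1:ℝ) * (w.2:ℝ) - (u.2:ℝ) * (w.1:ℝ) := by
    have : (1:ℝ) ≤ ((detZ u w : ℤ) : ℝ) := by exact_mod_cast huw
    push_cast [detZ] at this; linarith
  have hopen : IsOpen {p : ℝ × ℝ | 0 < (u.1:ℝ) * p.2 - (u.2:ℝ) * p.1 ∧
      0 < p.1 * (w.2:ℝ) - p.2 * (w.1:ℝ)} := by
    have o1 : IsOpen {p : ℝ × ℝ | 0 < (u.1:ℝ) * p.2 - (u.2:ℝ) * p.1} :=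
      isOpen_lt continuous_const (by fun_prop)
    have o2 : IsOpen {p : ℝ × ℝ | 0 < p.1 * (w.2:ℝ) - p.2 * (w.1:ℝ)} :=
      isOpen_lt continuous_const (by fun_prop)
    exact o1.inter o2
  have hsub : {p : ℝ × ℝ | 0 < (u.1:ℝ) * p.2 - (u.2:ℝ) * p.1 ∧
      0 < p.1 * (w.2:ℝ) - p.2 * (w.1:ℝ)} ⊆ coneOf u w := by
    rintro p ⟨hp1, hp2⟩
    have hD' : (u.1:ℝ) * (w.2:ℝ) - (u.2:ℝ) * (w.1:ℝ) ≠ 0 := ne_of_gt hD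
    refine ⟨(p.1 * w.2 - p.2 * w.1) / ((u.1:ℝ) * (w.2:ℝ) - (u.2:ℝ) * (w.1:ℝ)),
      ((u.1:ℝ) * p.2 - (u.2:ℝ) * p.1) / ((u.1:ℝ) * (w.2:ℝ) - (u.2:ℝ) * (w.1:ℝ)),
      le_of_lt (div_pos hp2 hD), le_of_lt (div_pos hp1 hD), ?_⟩
    rw [Prod.ext_iff]
    constructor <;>
      · simp only [toR2, Prod.fst_add, Prod.snd_add, Prod.smul_fst, Prod.smul_snd,
          smul_eq_mul]
        field_simp
        have hD2 : (w.2:ℝ) * u.1 - w.1 * u.2 ≠ 0 := by intro h; apply hD'; linarith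
        field_simp
        ring
  have hx : toR2 x ∈ {p : ℝ × ℝ | 0 < (u.1:ℝ) * p.2 - (u.2:ℝ) * p.1 ∧
      0 < p.1 * (w.2:ℝ) - p.2 * (w.1:ℝ)} := by
    constructor
    · have : (1:ℝ) ≤ ((detZ u x : ℤ) : ℝ) := by exact_mod_cast h1
      push_cast [detZ] at this; simp only [toR2]; linarith
    · have : (1:ℝ) ≤ ((detZ x w : ℤ) : ℝ) := by exact_mod_cast h2
      push_cast [detZ] at this; simp only [toR2]; linarith
  exact interior_maximal hsub hopen hx

lemma interiors_meet {u1 w1 u2 w2 : ℤ × ℤ} (x : ℤ × ℤ)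
    (hd1 : 1 ≤ detZ u1 w1) (hd2 : 1 ≤ detZ u2 w2)
    (ha : 1 ≤ detZ u1 x) (hb : 1 ≤ detZ x w1)
    (hc : 1 ≤ detZ u2 x) (hd : 1 ≤ detZ x w2)
    (h : interior (coneOf u1 w1) ∩ interior (coneOf u2 w2) = ∅) : False := by
  have h1 := mem_interior_cone_s13 _ _ _ hd1 ha hb
  have h2 := mem_interior_cone_s13 _ _ _ hd2 hc hd
  have : toR2 x ∈ interior (coneOf u1 w1) ∩ interior (coneOf u2 w2) := ⟨h1, h2⟩
  rw [h] at this
  exact this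

lemma key_arith (a b c p q r s t : ℤ) (ha : 2 ≤ a) (hb : 2 ≤ b) (hc : 2 ≤ c)
    (e1 : q * r = 1 + b * t) (e2 : a * r - p * t = c) (e3 : s = p * q - a * b)
    (i1 : p ≤ a) (i2 : q ≤ b) (i3 : r ≤ b) (i4 : -c ≤ s)
    (s1 : s ≤ 0 ∨ 0 ≤ q) (s4 : 0 ≤ q ∨ t ≤ 0) (s5 : 0 ≤ r ∨ 0 ≤ p) : p = a := by
  have p3 : a - s * t = c * q := by linear_combination (-a) * e1 + q * e2 + (-t) * e3
  -- Step 1 : 1 ≤ q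
  have hq : 1 ≤ q := by
    by_contra hq
    push_neg at hq
    rcases (by omega : q = 0 ∨ q ≤ -1) with h0 | hneg
    · have hbt : b * t = -1 := by rw [h0] at e1; linarith
      have hdvd : b ∣ (1:ℤ) := (dvd_neg).mp ⟨t, hbt.symm⟩
      have := Int.le_of_dvd one_pos hdvd
      omega
    · have ht : t ≤ 0 := s4.resolve_left (by omega)
      have hs : s ≤ 0 := s1.resolve_right (by omega)
      rcases (by omega : t = 0 ∨ t ≤ -1) with h0 | htn
      · rw [h0] at p3
        nlinarith
      · have h1 : a ≤ c * (q - t) := by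
          nlinarith [mul_nonneg (by linarith : (0:ℤ) ≤ c + s) (by linarith : (0:ℤ) ≤ -t)]
        have h2 : 1 ≤ q - t := by
          nlinarith [mul_nonneg (by linarith : (0:ℤ) ≤ c) (by linarith : (0:ℤ) ≤ t - q + (q - t))]
        have h3 : b * (q - t) ≤ 1 := by
          nlinarith [mul_nonneg (show (0:ℤ) ≤ -q by omega) (show (0:ℤ) ≤ b - r by omega)]
        nlinarith [mul_le_mul_of_nonneg_right hb (show (0:ℤ) ≤ q - t by linarith)]
  -- Step 2 : 0 ≤ t
  have ht : 0 ≤ t := by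
    by_contra ht
    push_neg at ht
    have ht1 : t ≤ -1 := by omega
    have hr : r ≤ -1 := by
      by_contra h
      push_neg at h
      nlinarith [mul_nonneg (by linarith : (0:ℤ) ≤ q) (by omega : (0:ℤ) ≤ r),
        mul_le_mul_of_nonneg_left ht1 (by linarith : (0:ℤ) ≤ b)]
    have hp : 0 ≤ p := s5.resolve_left (by omega)
    have hbr : b * (r - t) ≤ 1 := by
      nlinarith [mul_nonneg (show (0:ℤ) ≤ b - q by linarith) (show (0:ℤ) ≤ -r by linarith)]
    have hrt : r ≤ t := by
      by_contra h
      push_neg at h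
      nlinarith [mul_le_mul_of_nonneg_left (show (1:ℤ) ≤ r - t by omega)
        (by linarith : (0:ℤ) ≤ b)]
    nlinarith [mul_le_mul_of_nonneg_left hrt (show (0:ℤ) ≤ a by linarith),
      mul_nonneg (show (0:ℤ) ≤ -t by linarith) (show (0:ℤ) ≤ a - p by linarith)]
  -- Step 3 : 1 ≤ r
  have hr : 1 ≤ r := by
    by_contra h
    push_neg at h
    nlinarith [mul_nonneg (by linarith : (0:ℤ) ≤ q) (by omega : (0:ℤ) ≤ -r),
      mul_nonneg (by linarith : (0:ℤ) ≤ b) ht]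
  -- Step 4
  rcases (by omega : t = 0 ∨ 1 ≤ t) with h0 | ht1
  · rw [h0] at e1 p3
    have hq1 : q = 1 := by
      by_contra h
      nlinarith [mul_le_mul_of_nonneg_right (show (2:ℤ) ≤ q by omega) (by linarith : (0:ℤ) ≤ r)]
    have hca : a = c := by rw [hq1] at p3; linarith
    have hpab : a * b - a ≤ p := by rw [hq1] at e3; linarith
    nlinarith [mul_le_mul_of_nonneg_left hb (show (0:ℤ) ≤ a by linarith)]
  · have hqt : t + 1 ≤ q := by
      by_contra h
      push_neg at h
      nlinarith [mul_le_mul_of_nonneg_right (show q ≤ t by omega) (show (0:ℤ) ≤ r by linarith),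
        mul_le_mul_of_nonneg_left i3 (show (0:ℤ) ≤ t by linarith)]
    have hrt : t + 1 ≤ r := by
      by_contra h
      push_neg at h
      nlinarith [mul_le_mul_of_nonneg_left (show r ≤ t by omega) (show (0:ℤ) ≤ q by linarith),
        mul_le_mul_of_nonneg_right i2 (show (0:ℤ) ≤ t by linarith)]
    have hac : c ≤ a := by
      nlinarith [mul_nonneg (show (0:ℤ) ≤ s + c by linarith) (show (0:ℤ) ≤ t by linarith),
        mul_le_mul_of_nonneg_left (show (1:ℤ) ≤ q - t by omega) (show (0:ℤ) ≤ c by linarith)]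
    have hca : a ≤ c := by
      nlinarith [mul_nonneg (show (0:ℤ) ≤ a - p by linarith) (show (0:ℤ) ≤ t by linarith),
        mul_le_mul_of_nonneg_left (show (1:ℤ) ≤ r - t by omega) (show (0:ℤ) ≤ a by linarith)]
    have hrt1 : r = t + 1 := by
      by_contra h
      nlinarith [mul_nonneg (show (0:ℤ) ≤ a - p by linarith) (show (0:ℤ) ≤ t by linarith),
        mul_le_mul_of_nonneg_left (show (2:ℤ) ≤ r - t by omega) (show (0:ℤ) ≤ a by linarith)]
    have h5 : (a - p) * t = 0 := by
      rw [hrt1] at e2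
      have : c = a := le_antisymm hac hca
      linear_combination e2 + this
    rcases mul_eq_zero.mp h5 with h6 | h6
    · omega
    · omega

/-- Lemma 4.1: there is no LDP fan data of length 5 whose singular cones are exactly
`σ_1`, `σ_3`, `σ_5` (indexed here as `σ_0`, `σ_2`, `σ_4`). -/
theorem no_alternating_singular_pentagon :
    ¬ ∃ v : ZMod 5 → ℤ × ℤ, IsLDPFanData 5 v ∧
      2 ≤ detZ (v 0) (v 1) ∧
      detZ (v 1) (v 2) = 1 ∧
      2 ≤ detZ (v 2) (v 3) ∧
      detZ (v 3) (v 4) = 1 ∧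
      2 ≤ detZ (v 4) (v 0) := by
  rintro ⟨v, ⟨⟨-, hprim, -, -, hdisj⟩, hf⟩, h0, h1, h2, h3, h4⟩
  -- antisymmetry facts
  have anti02 : detZ (v 2) (v 0) = -detZ (v 0) (v 2) := by simp only [detZ]; ring
  have anti13 : detZ (v 3) (v 1) = -detZ (v 1) (v 3) := by simp only [detZ]; ring
  have anti24 : detZ (v 4) (v 2) = -detZ (v 2) (v 4) := by simp only [detZ]; ring
  have anti04 : detZ (v 0) (v 4) = -detZ (v 4) (v 0) := by simp only [detZ]; ring
  have anti34 : detZ (v 4) (v 3) = -detZ (v 3) (v 4) := by simp only [detZ]; ring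
  have anti03 : detZ (v 3) (v 0) = -detZ (v 0) (v 3) := by simp only [detZ]; ring
  -- f-inequalities
  have hf1 := hf 1
  have hf2 := hf 2
  have hf3 := hf 3
  have hf4 := hf 4
  simp only [fanF, show (1:ZMod 5) - 1 = 0 from by decide,
    show (1:ZMod 5) + 1 = 2 from by decide] at hf1
  simp only [fanF, show (2:ZMod 5) - 1 = 1 from by decide,
    show (2:ZMod 5) + 1 = 3 from by decide] at hf2
  simp only [fanF, show (3:ZMod 5) - 1 = 2 from by decide,
    show (3:ZMod 5) + 1 = 4 from by decide] at hf3
  simp only [fanF, show (4:ZMod 5) - 1 = 3 from by decide,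
    show (4:ZMod 5) + 1 = 0 from by decide] at hf4
  have i1 : detZ (v 0) (v 2) ≤ detZ (v 0) (v 1) := by rw [h1, anti02] at hf1; linarith
  have i2 : detZ (v 1) (v 3) ≤ detZ (v 2) (v 3) := by rw [h1, anti13] at hf2; linarith
  have i3 : detZ (v 2) (v 4) ≤ detZ (v 2) (v 3) := by rw [h3, anti24] at hf3; linarith
  have i4 : -detZ (v 4) (v 0) ≤ detZ (v 0) (v 3) := by rw [h3] at hf4; linarith
  -- Pluecker relations
  have pl1 : detZ (v 1) (v 2) * detZ (v 3) (v 4) - detZ (v 1) (v 3) * detZ (v 2) (v 4)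
      + detZ (v 1) (v 4) * detZ (v 2) (v 3) = 0 := by simp only [detZ]; ring
  have pl2 : detZ (v 0) (v 1) * detZ (v 2) (v 4) - detZ (v 0) (v 2) * detZ (v 1) (v 4)
      + detZ (v 0) (v 4) * detZ (v 1) (v 2) = 0 := by simp only [detZ]; ring
  have pl3 : detZ (v 0) (v 1) * detZ (v 2) (v 3) - detZ (v 0) (v 2) * detZ (v 1) (v 3)
      + detZ (v 0) (v 3) * detZ (v 1) (v 2) = 0 := by simp only [detZ]; ring
  have e1 : detZ (v 1) (v 3) * detZ (v 2) (v 4)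
      = 1 + detZ (v 2) (v 3) * detZ (v 1) (v 4) := by rw [h1, h3] at pl1; linarith
  have e2 : detZ (v 0) (v 1) * detZ (v 2) (v 4)
      - detZ (v 0) (v 2) * detZ (v 1) (v 4) = detZ (v 4) (v 0) := by
    rw [h1, anti04] at pl2; linarith
  have e3 : detZ (v 0) (v 3)
      = detZ (v 0) (v 2) * detZ (v 1) (v 3)
        - detZ (v 0) (v 1) * detZ (v 2) (v 3) := by rw [h1] at pl3; linarith
  -- the three non-overlapping conditions
  have S1 : detZ (v 0) (v 3) ≤ 0 ∨ 0 ≤ detZ (v 1) (v 3) := by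
    by_contra hcon
    push_neg at hcon
    obtain ⟨hA, hB⟩ := hcon
    have hdisj03 := hdisj 0 3 (by decide)
    rw [show (0:ZMod 5) + 1 = 1 from by decide, show (3:ZMod 5) + 1 = 4 from by decide]
      at hdisj03
    set N : ℤ := 1 + detZ (v 4) (v 0) + |detZ (v 1) (v 4)| with hN
    have habs := abs_nonneg (detZ (v 1) (v 4))
    have habs2 := le_abs_self (detZ (v 1) (v 4))
    have hN0 : (0:ℤ) ≤ N := by omega
    refine interiors_meet (N * (v 3).1 + (v 4).1, N * (v 3).2 + (v 4).2)
      (by omega) (by omega) ?_ ?_ ?_ ?_ hdisj03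
    · have e : detZ (v 0) (N * (v 3).1 + (v 4).1, N * (v 3).2 + (v 4).2)
          = N * detZ (v 0) (v 3) + detZ (v 0) (v 4) := by simp only [detZ]; ring
      rw [e, anti04]
      have := mul_le_mul_of_nonneg_left (show (1:ℤ) ≤ detZ (v 0) (v 3) from hA) hN0
      linarith
    · have e : detZ (N * (v 3).1 + (v 4).1, N * (v 3).2 + (v 4).2) (v 1)
          = N * (-detZ (v 1) (v 3)) + (-detZ (v 1) (v 4)) := by simp only [detZ]; ring
      rw [e]
      have := mul_le_mul_of_nonneg_left (show (1:ℤ) ≤ -detZ (v 1) (v 3) from by omega) hN0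
      linarith
    · have e : detZ (v 3) (N * (v 3).1 + (v 4).1, N * (v 3).2 + (v 4).2)
          = detZ (v 3) (v 4) := by simp only [detZ]; ring
      rw [e, h3]
    · have e : detZ (N * (v 3).1 + (v 4).1, N * (v 3).2 + (v 4).2) (v 4)
          = N * detZ (v 3) (v 4) := by simp only [detZ]; ring
      rw [e, h3]
      omega
  have S4 : 0 ≤ detZ (v 1) (v 3) ∨ detZ (v 1) (v 4) ≤ 0 := by
    by_contra hcon
    push_neg at hcon
    obtain ⟨hB, hA⟩ := hcon
    have hdisj13 := hdisj 1 3 (by decide)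
    rw [show (1:ZMod 5) + 1 = 2 from by decide, show (3:ZMod 5) + 1 = 4 from by decide]
      at hdisj13
    set N : ℤ := 1 + detZ (v 2) (v 3) + |detZ (v 2) (v 4)| with hN
    have habs := abs_nonneg (detZ (v 2) (v 4))
    have habs2 := neg_abs_le (detZ (v 2) (v 4))
    have hN0 : (0:ℤ) ≤ N := by omega
    refine interiors_meet (N * (v 1).1 + (v 2).1, N * (v 1).2 + (v 2).2)
      (by omega) (by omega) ?_ ?_ ?_ ?_ hdisj13
    · have e : detZ (v 1) (N * (v 1).1 + (v 2).1, N * (v 1).2 + (v 2).2)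
          = detZ (v 1) (v 2) := by simp only [detZ]; ring
      rw [e, h1]
    · have e : detZ (N * (v 1).1 + (v 2).1, N * (v 1).2 + (v 2).2) (v 2)
          = N * detZ (v 1) (v 2) := by simp only [detZ]; ring
      rw [e, h1]
      omega
    · have e : detZ (v 3) (N * (v 1).1 + (v 2).1, N * (v 1).2 + (v 2).2)
          = N * (-detZ (v 1) (v 3)) + (-detZ (v 2) (v 3)) := by simp only [detZ]; ring
      rw [e]
      have := mul_le_mul_of_nonneg_left (show (1:ℤ) ≤ -detZ (v 1) (v 3) from by omega) hN0
      linarith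
    · have e : detZ (N * (v 1).1 + (v 2).1, N * (v 1).2 + (v 2).2) (v 4)
          = N * detZ (v 1) (v 4) + detZ (v 2) (v 4) := by simp only [detZ]; ring
      rw [e]
      have := mul_le_mul_of_nonneg_left (show (1:ℤ) ≤ detZ (v 1) (v 4) from by omega) hN0
      linarith
  have S5 : 0 ≤ detZ (v 2) (v 4) ∨ 0 ≤ detZ (v 0) (v 2) := by
    by_contra hcon
    push_neg at hcon
    obtain ⟨hA, hB⟩ := hcon
    have hdisj24 := hdisj 2 4 (by decide)
    rw [show (2:ZMod 5) + 1 = 3 from by decide, show (4:ZMod 5) + 1 = 0 from by decide]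
      at hdisj24
    set N : ℤ := 2 + |detZ (v 0) (v 3)| with hN
    have habs := abs_nonneg (detZ (v 0) (v 3))
    have habs2 := le_abs_self (detZ (v 0) (v 3))
    have hN0 : (0:ℤ) ≤ N := by omega
    refine interiors_meet (N * (v 2).1 + (v 3).1, N * (v 2).2 + (v 3).2)
      (by omega) (by omega) ?_ ?_ ?_ ?_ hdisj24
    · have e : detZ (v 2) (N * (v 2).1 + (v 3).1, N * (v 2).2 + (v 3).2)
          = detZ (v 2) (v 3) := by simp only [detZ]; ring
      rw [e]; omega
    · have e : detZ (N * (v 2).1 + (v 3).1, N * (v 2).2 + (v 3).2) (v 3)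
          = N * detZ (v 2) (v 3) := by simp only [detZ]; ring
      rw [e]
      nlinarith
    · have e : detZ (v 4) (N * (v 2).1 + (v 3).1, N * (v 2).2 + (v 3).2)
          = N * (-detZ (v 2) (v 4)) + (-detZ (v 3) (v 4)) := by simp only [detZ]; ring
      rw [e, h3]
      have := mul_le_mul_of_nonneg_left (show (1:ℤ) ≤ -detZ (v 2) (v 4) from by omega) hN0
      linarith
    · have e : detZ (N * (v 2).1 + (v 3).1, N * (v 2).2 + (v 3).2) (v 0)
          = N * (-detZ (v 0) (v 2)) + (-detZ (v 0) (v 3)) := by simp only [detZ]; ring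
      rw [e]
      have := mul_le_mul_of_nonneg_left (show (1:ℤ) ≤ -detZ (v 0) (v 2) from by omega) hN0
      linarith
  -- the arithmetic core forces det(v0,v2) = det(v0,v1)
  have hpa : detZ (v 0) (v 2) = detZ (v 0) (v 1) :=
    key_arith (detZ (v 0) (v 1)) (detZ (v 2) (v 3)) (detZ (v 4) (v 0))
      (detZ (v 0) (v 2)) (detZ (v 1) (v 3)) (detZ (v 2) (v 4))
      (detZ (v 0) (v 3)) (detZ (v 1) (v 4))
      h0 h2 h4 e1 e2 (by linarith [e3]) i1 i2 i3 i4 S1 S4 S5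
  -- primitivity of v 0 gives the contradiction
  have hcop : IsCoprime ((v 0).1) ((v 0).2) := Int.isCoprime_iff_gcd_eq_one.mpr (hprim 0)
  obtain ⟨x, y, hxy⟩ := hcop
  have hdet0 : (v 0).1 * ((v 1).2 - (v 2).2) - (v 0).2 * ((v 1).1 - (v 2).1) = 0 := by
    have h' := hpa
    simp only [detZ] at h'
    linarith
  have hw1 : (x * ((v 1).1 - (v 2).1) + y * ((v 1).2 - (v 2).2)) * (v 0).1
      = (v 1).1 - (v 2).1 := by
    linear_combination y * hdet0 + ((v 1).1 - (v 2).1) * hxy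
  have hw2 : (x * ((v 1).1 - (v 2).1) + y * ((v 1).2 - (v 2).2)) * (v 0).2
      = (v 1).2 - (v 2).2 := by
    linear_combination (-x) * hdet0 + ((v 1).2 - (v 2).2) * hxy
  have hk : (x * ((v 1).1 - (v 2).1) + y * ((v 1).2 - (v 2).2)) * detZ (v 0) (v 1) = 1 := by
    have h12 := h1
    simp only [detZ] at h12 ⊢
    linear_combination ((v 1).2) * hw1 - ((v 1).1) * hw2 + h12
  have hdvd : detZ (v 0) (v 1) ∣ 1 :=
    ⟨x * ((v 1).1 - (v 2).1) + y * ((v 1).2 - (v 2).2), by linear_combination -hk⟩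
  have := Int.le_of_dvd one_pos hdvd
  omega
end
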